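/- For a j ∈ {1,…,n+1} and the generator 𝐞_{{j}} = (−1)^{j−1}·e_{{j},{j},≤} of the summand of H_{n+1}(ℂ^{n+1}, ⋃_i S_i) corresponding to S_j (in the standard symmetric arrangement a_j = i·e_j, r_j = 1), the intersection index with (i·ℝ)^{n+1} equals 1: ⟨(i·ℝ)^{n+1} | 𝐞_{{j}}⟩ = 1. The representative 𝐞_{{j}} has support in a_j + ℝ^{n+1} and meets (i·ℝ)^{n+1} only in the single point a_j, where the orientations match after accounting for the sign (−1)^{j−1} coming from the change of basis v₁,…,v̂_j,…,v_{n+1}, v. -/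
import Mathlib


open Matrix in
lemma stmt18_detM (n : ℕ) (j : Fin (n + 1)) :
    (Matrix.of fun i c : Fin (n + 1) =>
      (Fin.snoc (α := fun _ => Fin (n + 1) → ℝ)
        (fun c' k => if k = j.succAbove c' then (0:ℝ) else 1)
        (fun _ => 1) c) i).det = (-1 : ℝ) ^ (j : ℕ) := by
  set M : Matrix (Fin (n + 1)) (Fin (n + 1)) ℝ :=
    Matrix.of fun i c =>
      (Fin.snoc (α := fun _ => Fin (n + 1) → ℝ)
        (fun c' k => if k = j.succAbove c' then (0:ℝ) else 1)
        (fun _ => 1) c) i with hMdef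
  have hMc : ∀ (i : Fin (n+1)) (c : Fin n),
      M i c.castSucc = if i = j.succAbove c then 0 else 1 := by
    intro i c; simp [hMdef, Fin.snoc_castSucc]
  have hMl : ∀ i : Fin (n+1), M i (Fin.last n) = 1 := by
    intro i; simp [hMdef, Fin.snoc_last]
  -- column operation matrix
  set C : Matrix (Fin (n + 1)) (Fin (n + 1)) ℝ :=
    Matrix.of fun k c => if k = c then 1 else if k = Fin.last n then -1 else 0 with hCdef
  have hCdet : C.det = 1 := by
    rw [Matrix.det_of_lowerTriangular C]
    · simp [hCdef]
    · intro a b hab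
      have hab' : a < b := hab
      simp only [hCdef, Matrix.of_apply]
      rw [if_neg hab'.ne, if_neg]
      exact fun h => absurd (h ▸ hab') (not_lt.2 (Fin.le_last b))
  have hMCc : ∀ (i : Fin (n+1)) (c : Fin n),
      (M * C) i c.castSucc = if i = j.succAbove c then -1 else 0 := by
    intro i c
    have hne : c.castSucc ≠ Fin.last n := (Fin.castSucc_lt_last c).ne
    rw [Matrix.mul_apply]
    rw [Finset.sum_eq_add_of_mem c.castSucc (Fin.last n) (Finset.mem_univ _)
      (Finset.mem_univ _) hne ?_]
    · simp only [hCdef, Matrix.of_apply, if_pos rfl, if_neg hne.symm,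
        if_neg (Ne.symm hne)]
      rw [hMc, hMl]
      split <;> norm_num
    · intro k _ hk
      simp only [hCdef, Matrix.of_apply]
      rw [if_neg hk.1, if_neg hk.2]
      ring
  have hMCl : ∀ i : Fin (n+1), (M * C) i (Fin.last n) = 1 := by
    intro i
    rw [Matrix.mul_apply]
    rw [Finset.sum_eq_single (Fin.last n)]
    · simp only [hCdef, Matrix.of_apply, if_pos rfl]
      rw [hMl]; norm_num
    · intro k _ hk
      simp only [hCdef, Matrix.of_apply]
      rw [if_neg hk, if_neg hk]
      ring
    · simp
  have hMC : (M * C).det = (-1 : ℝ) ^ (j : ℕ) := by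
    rw [Matrix.det_succ_row (M * C) j]
    rw [Fin.sum_univ_castSucc]
    have hzero : ∀ c : Fin n,
        (-1 : ℝ) ^ ((j : ℕ) + (c.castSucc : ℕ)) * (M * C) j c.castSucc *
          ((M * C).submatrix j.succAbove c.castSucc.succAbove).det = 0 := by
      intro c
      rw [hMCc, if_neg (Fin.succAbove_ne j c).symm]
      ring
    rw [Finset.sum_congr rfl fun c _ => hzero c, Finset.sum_const_zero, zero_add]
    rw [hMCl]
    have hsub : (M * C).submatrix j.succAbove (Fin.last n).succAbove
        = (-1 : ℝ) • (1 : Matrix (Fin n) (Fin n) ℝ) := by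
      ext r c
      rw [Matrix.submatrix_apply, Fin.succAbove_last, hMCc]
      by_cases h : r = c
      · subst h; simp
      · rw [if_neg fun hc => h (j.succAbove_right_injective hc)]
        simp [Matrix.one_apply_ne h]
    rw [hsub, Matrix.det_smul, Matrix.det_one]
    simp only [smul_eq_mul, mul_one, Fintype.card_fin, Fin.val_last]
    rw [pow_add, mul_assoc, ← pow_add, Even.neg_one_pow ⟨n, rfl⟩, mul_one]
  have := Matrix.det_mul M C
  rw [hCdet, mul_one] at this
  rw [← this, hMC]

/-- In the standard symmetric arrangement (`a_j = i·e_j`, `r_j = 1`), the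
generator `𝐞_{{j}} = (−1)^{j−1}·e_{{j},{j},≤}` of the summand of
`H_{n+1}(ℂ^{n+1}, ⋃_i S_i)` corresponding to `S_j` has intersection index
`⟨(i·ℝ)^{n+1} | 𝐞_{{j}}⟩ = 1` with `(i·ℝ)^{n+1}`.  Formally: the supporting cell
`{z | Im z = e_j, (z − i·e_j)² ≤ 1}` meets `(i·ℝ)^{n+1}` exactly in the single point
`a_j = i·e_j`, and at that point the orientations match: the sign `(−1)^{(j:ℕ)}` (0-based
version of `(−1)^{j−1}`) times the determinant of the change-of-basis matrix from the
combined tangent basis (the cell's basis `v₁,…,v̂_j,…,v_{n+1},v` of real vectors followed by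
the imaginary basis `i·e₁,…,i·e_{n+1}` of `(i·ℝ)^{n+1}`) to the standard oriented basis of
`ℂ^{n+1} ≅ ℝ^{2n+2}` equals `1`, so the index (the orientation sign at the unique
transversal intersection point) is `1`. -/
theorem stmt_18 (n : ℕ) (j : Fin (n + 1)) :
    let aj : Fin (n + 1) → ℂ := fun k => if k = j then Complex.I else 0
    -- the cell `e_{{j},{j},≤}`, i.e. `{z | Im z = e_j, (z − a_j)² ≤ 1}`
    let cell : Set (Fin (n + 1) → ℂ) :=
      {z | (∀ k, (z k).im = if k = j then 1 else 0) ∧ ∑ k, (z k).re ^ 2 ≤ 1}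
    let iR : Set (Fin (n + 1) → ℂ) := {z | ∀ k, (z k).re = 0}
    let vj : Fin (n + 1) → Fin (n + 1) → ℝ := fun l k => if k = l then 0 else 1
    let cols : Fin (n + 1) → Fin (n + 1) → ℝ :=
      Fin.snoc (fun c => vj (j.succAbove c)) (fun _ => 1)
    let M : Matrix (Fin (n + 1)) (Fin (n + 1)) ℝ := Matrix.of fun i c => cols c i
    -- combined tangent bases at `a_j` in real coordinates (real parts ⊕ imaginary parts)
    let B : Matrix (Fin (n + 1) ⊕ Fin (n + 1)) (Fin (n + 1) ⊕ Fin (n + 1)) ℝ :=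
      Matrix.fromBlocks M 0 0 1
    cell ∩ iR = {aj} ∧ (-1 : ℝ) ^ (j : ℕ) * Matrix.det B = 1 := by
  intro aj cell iR vj cols M B
  constructor
  · ext z
    simp only [Set.mem_inter_iff, Set.mem_setOf_eq, Set.mem_singleton_iff, cell, iR]
    constructor
    · rintro ⟨⟨him, _⟩, hre⟩
      funext k
      apply Complex.ext
      · rw [hre k]
        simp only [aj]
        split <;> simp
      · rw [him k]
        simp only [aj]
        split <;> simp
    · rintro rfl
      refine ⟨⟨fun k => ?_, ?_⟩, fun k => ?_⟩
      · simp only [aj]; split <;> simp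
      · have : ∀ k, ((aj k).re) ^ 2 = 0 := by
          intro k; simp only [aj]; split <;> simp
        rw [Finset.sum_congr rfl fun k _ => this k, Finset.sum_const_zero]
        norm_num
      · simp only [aj]; split <;> simp
  · have hB : B.det = M.det := by
      simp only [B, Matrix.det_fromBlocks_zero₂₁, Matrix.det_one, mul_one]
    rw [hB]
    have hM : M.det = (-1 : ℝ) ^ (j : ℕ) := stmt18_detM n j
    rw [hM, ← pow_add, Even.neg_one_pow ⟨(j : ℕ), rfl⟩]
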